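/- The set of positive semidefinite 2×2 real (or complex) matrices of operator norm at most 1 is not LNC: with x' = 0, x the rank-one projection diag(1,0), and x_t the rank-one projection with entries [[t, √(t-t²)],[√(t-t²), 1-t]] for t ∈ (0,1), we have x_t → x as t → 1 but x_t + (x'-x)/2 is never positive semidefinite. -/

import Mathlib

open Set Filter Topology

lemma dot2 (a b c : ℝ) (w : Fin 2 → ℝ) :
    dotProduct (star w) ((!![a, b; b, c]).mulVec w)
      = a * (w 0) ^ 2 + 2 * b * (w 0) * (w 1) + c * (w 1) ^ 2 := by
  simp [dotProduct, Matrix.mulVec, Fin.sum_univ_two]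
  ring

lemma psd2 (a b c : ℝ) (h : ∀ u v : ℝ, 0 ≤ a * u ^ 2 + 2 * b * u * v + c * v ^ 2) :
    (!![a, b; b, c]).PosSemidef := by
  refine Matrix.PosSemidef.of_dotProduct_mulVec_nonneg ?_ ?_
  · ext i j
    fin_cases i <;> fin_cases j <;> simp [Matrix.conjTranspose_apply]
  · intro w
    rw [dot2]
    exact h (w 0) (w 1)

/-- Locally nonconical (LNC). -/
def LNC {X : Type*} [AddCommGroup X] [Module ℝ X] [TopologicalSpace X] (Q : Set X) : Prop :=
  ∀ x ∈ Q, ∀ x' ∈ Q,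
    ∃ U, U ⊆ Q ∧ U ∈ nhdsWithin x Q ∧ ∀ u ∈ U, u + (2⁻¹ : ℝ) • (x' - x) ∈ Q

/-- The positive part of the unit ball of the 2×2 real matrix algebra, i.e. the set of
positive semidefinite matrices `A` with `A ≤ 1` (operator norm at most 1), is not LNC:
with `x' = 0`, `x = diag(1,0)` and `x_t = [[t, √(t-t²)],[√(t-t²), 1-t]]` for `t ∈ (0,1)`,
all these matrices lie in the set, `x_t → x` as `t → 1⁻`, but `x_t + (x' - x)/2` is never
positive semidefinite. -/
theorem posPartUnitBall_matrix_not_lnc :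
    let S : Set (Matrix (Fin 2) (Fin 2) ℝ) :=
      {A | A.PosSemidef ∧ (1 - A).PosSemidef}
    let x : Matrix (Fin 2) (Fin 2) ℝ := !![1, 0; 0, 0]
    let xt : ℝ → Matrix (Fin 2) (Fin 2) ℝ := fun t =>
      !![t, Real.sqrt (t - t ^ 2); Real.sqrt (t - t ^ 2), 1 - t]
    x ∈ S ∧ (0 : Matrix (Fin 2) (Fin 2) ℝ) ∈ S ∧
    (∀ t ∈ Set.Ioo (0 : ℝ) 1, xt t ∈ S) ∧
    Tendsto xt (nhdsWithin 1 (Set.Ioo (0 : ℝ) 1)) (𝓝 x) ∧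
    (∀ t ∈ Set.Ioo (0 : ℝ) 1,
      ¬ (xt t + (2⁻¹ : ℝ) • ((0 : Matrix (Fin 2) (Fin 2) ℝ) - x)).PosSemidef) ∧
    ¬ LNC S := by
  intro S x xt
  have hx : x ∈ S := by
    constructor
    · exact psd2 1 0 0 (fun u v => by nlinarith [sq_nonneg u])
    · have h1 : (1 : Matrix (Fin 2) (Fin 2) ℝ) - x = !![0, 0; 0, 1] := by
        ext i j; fin_cases i <;> fin_cases j <;> simp [x, Matrix.one_apply]
      rw [show (1 : Matrix (Fin 2) (Fin 2) ℝ) - x = !![0, 0; 0, 1] from h1]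
      exact psd2 0 0 1 (fun u v => by nlinarith [sq_nonneg v])
  have h0 : (0 : Matrix (Fin 2) (Fin 2) ℝ) ∈ S := by
    refine ⟨Matrix.PosSemidef.zero, ?_⟩
    rw [sub_zero]
    exact Matrix.PosSemidef.one
  have hIoo : ∀ t ∈ Set.Ioo (0 : ℝ) 1, xt t ∈ S := by
    rintro t ⟨ht0, ht1⟩
    have hs : Real.sqrt (t - t ^ 2) = Real.sqrt t * Real.sqrt (1 - t) := by
      rw [show t - t ^ 2 = t * (1 - t) by ring, Real.sqrt_mul ht0.le]
    have h2 : Real.sqrt t ^ 2 = t := Real.sq_sqrt ht0.le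
    have h3 : Real.sqrt (1 - t) ^ 2 = 1 - t := Real.sq_sqrt (by linarith)
    constructor
    · refine psd2 t _ (1 - t) (fun u v => ?_)
      rw [hs]
      nlinarith [sq_nonneg (Real.sqrt t * u + Real.sqrt (1 - t) * v)]
    · have heq : (1 : Matrix (Fin 2) (Fin 2) ℝ) - xt t
          = !![1 - t, -Real.sqrt (t - t ^ 2); -Real.sqrt (t - t ^ 2), t] := by
        ext i j; fin_cases i <;> fin_cases j <;> simp [xt, Matrix.one_apply] <;> ring
      rw [heq]
      refine psd2 (1 - t) _ t (fun u v => ?_)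
      rw [hs]
      nlinarith [sq_nonneg (Real.sqrt (1 - t) * u - Real.sqrt t * v)]
  have htend : Tendsto xt (nhdsWithin 1 (Set.Ioo (0 : ℝ) 1)) (𝓝 x) := by
    have hc : Continuous xt := by
      apply continuous_matrix
      intro i j
      fin_cases i <;> fin_cases j <;> simp [xt] <;> fun_prop
    have hx1 : xt 1 = x := by
      ext i j
      fin_cases i <;> fin_cases j <;> simp [xt, x] <;> norm_num
    have := hc.continuousAt (x := (1 : ℝ))
    rw [ContinuousAt, hx1] at this
    exact this.mono_left nhdsWithin_le_nhds
  have hneg : ∀ t ∈ Set.Ioo (0 : ℝ) 1,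
      ¬ (xt t + (2⁻¹ : ℝ) • ((0 : Matrix (Fin 2) (Fin 2) ℝ) - x)).PosSemidef := by
    rintro t ⟨ht0, ht1⟩ hpsd
    set s := Real.sqrt (t - t ^ 2) with hsdef
    have hs2 : s ^ 2 = t - t ^ 2 := Real.sq_sqrt (by nlinarith)
    have heq : xt t + (2⁻¹ : ℝ) • ((0 : Matrix (Fin 2) (Fin 2) ℝ) - x)
        = !![t - 2⁻¹, s; s, 1 - t] := by
      ext i j; fin_cases i <;> fin_cases j <;> simp [xt, x] <;> ring
    rw [heq] at hpsd
    have := hpsd.dotProduct_mulVec_nonneg ![1 - t, -s]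
    rw [dot2] at this
    simp only [Matrix.cons_val_zero, Matrix.cons_val_one, Matrix.head_cons] at this
    nlinarith [this]
  refine ⟨hx, h0, hIoo, htend, hneg, ?_⟩
  intro hL
  obtain ⟨U, hUS, hUmem, hU⟩ := hL x hx 0 h0
  have hne : (nhdsWithin (1 : ℝ) (Set.Ioo 0 1)).NeBot := by
    apply mem_closure_iff_nhdsWithin_neBot.mp
    rw [closure_Ioo (by norm_num : (0 : ℝ) ≠ 1)]
    constructor <;> norm_num
  have htend' : Tendsto xt (nhdsWithin 1 (Set.Ioo (0 : ℝ) 1)) (nhdsWithin x S) := by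
    rw [tendsto_nhdsWithin_iff]
    exact ⟨htend, eventually_nhdsWithin_of_forall hIoo⟩
  have hev : ∀ᶠ t in nhdsWithin 1 (Set.Ioo (0 : ℝ) 1), xt t ∈ U :=
    htend' hUmem
  obtain ⟨t, htU, htIoo⟩ := (hev.and (eventually_mem_nhdsWithin)).exists
  exact hneg t htIoo (hU (xt t) htU).1
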